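/- Let R be a ring and x, y ∈ R satisfy x·y^i·x = 0 for all integers i ≥ 1. Then for every element w of the unital subring generated by x and y, one has (x·y)·w·(x·y) = 0. -/

import Mathlib

/-- Let `R` be a unital ring and `x, y ∈ R` with `x·yⁱ·x = 0` for all `i ≥ 1`. Then
`(x·y)·w·(x·y) = 0` for every `w` in the unital subring generated by `x` and `y`. -/
theorem stmt_5 (R : Type*) [Ring R] (x y : R)
    (hrel : ∀ i : ℕ, 1 ≤ i → x * y ^ i * x = 0)
    (w : R) (hw : w ∈ Subring.closure ({x, y} : Set R)) :
    (x * y) * w * (x * y) = 0 := by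
  set S : Set R := {r | ∃ k : ℕ, 1 ≤ k ∧ r = x * y ^ k} with hS
  set M : AddSubgroup R := AddSubgroup.closure S with hM
  have hgen : ∀ i : ℕ, 1 ≤ i → x * y ^ i ∈ M := fun i hi =>
    AddSubgroup.subset_closure ⟨i, hi, rfl⟩
  have step : ∀ b : R, (∀ k : ℕ, 1 ≤ k → x * y ^ k * b ∈ M) →
      ∀ m ∈ M, m * b ∈ M := by
    intro b hb m hm
    induction hm using AddSubgroup.closure_induction with
    | mem r hr =>
      obtain ⟨k, hk, rfl⟩ := hr
      exact hb k hk
    | zero => rw [zero_mul]; exact zero_mem M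
    | add c d hc hd ihc ihd => rw [add_mul]; exact add_mem ihc ihd
    | neg c hc ihc => rw [neg_mul]; exact neg_mem ihc
  have key : ∀ w ∈ Subring.closure ({x, y} : Set R),
      ∀ i : ℕ, 1 ≤ i → x * y ^ i * w ∈ M := by
    intro w hw
    induction hw using Subring.closure_induction with
    | mem r hr =>
      intro i hi
      rcases hr with h | h
      · rw [h, hrel i hi]; exact zero_mem M
      · rw [h, mul_assoc, ← pow_succ]
        exact hgen _ (by omega)
    | one => intro i hi; rw [mul_one]; exact hgen i hi
    | zero => intro i hi; rw [mul_zero]; exact zero_mem M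
    | add a b ha hb iha ihb =>
      intro i hi
      rw [mul_add]; exact add_mem (iha i hi) (ihb i hi)
    | neg a ha iha =>
      intro i hi
      rw [mul_neg]; exact neg_mem (iha i hi)
    | mul a b ha hb iha ihb =>
      intro i hi
      rw [← mul_assoc]
      exact step b ihb _ (iha i hi)
  have hkill : ∀ m ∈ M, m * (x * y) = 0 := by
    intro m hm
    induction hm using AddSubgroup.closure_induction with
    | mem r hr =>
      obtain ⟨k, hk, rfl⟩ := hr
      rw [← mul_assoc, hrel k hk, zero_mul]
    | zero => rw [zero_mul]
    | add c d hc hd ihc ihd => rw [add_mul, ihc, ihd, add_zero]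
    | neg c hc ihc => rw [neg_mul, ihc, neg_zero]
  have h1 : x * y * w ∈ M := by
    have := key w hw 1 le_rfl
    rwa [pow_one] at this
  exact hkill _ h1
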